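/- Under the standing hypotheses (a continuous; b, c continuous nonnegative; τ > 0; b_j < 1; t_j ↑ ∞; l = min{τ,1}), if limsup_{t→∞} ∫_{t−l}^{t} (∏_{s−τ < t_j ≤ s}(1−b_j))·b(s)·exp(∫_{s−τ}^{s} a(u) du) ds > 1, then every solution of x'(t) + a(t)x(t) + b(t)x(t−τ) + c(t)x([t−1]) = 0 (t ≠ t_i), Δx(t_i) = b_i x(t_i), is oscillatory. -/

import Mathlib

open Filter Topology intervalIntegral

section OscAux

open MeasureTheory Set

lemma osc_tiFinite (ti : ℕ → ℝ) (htiTop : Tendsto ti atTop atTop) (p q : ℝ) :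
    {j : ℕ | p < ti j ∧ ti j ≤ q}.Finite := by
  obtain ⟨N, hN⟩ := eventually_atTop.1 (htiTop.eventually (eventually_gt_atTop q))
  refine Set.Finite.subset (Set.finite_Iio N) ?_
  intro j hj
  by_contra h
  exact absurd (hN j (not_lt.1 (by simpa using h))) (not_lt.2 hj.2)

lemma osc_tiFinite' (ti : ℕ → ℝ) (htiTop : Tendsto ti atTop atTop) (p q : ℝ) :
    {j : ℕ | ti j ∈ Set.Ioo p q}.Finite :=
  Set.Finite.subset (osc_tiFinite ti htiTop p q) (fun j hj => ⟨hj.1, hj.2.le⟩)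

lemma osc_discrete (ti : ℕ → ℝ) (htiTop : Tendsto ti atTop atTop) (u : ℝ) :
    ∃ ε > 0, ∀ j, ti j ≠ u → ti j ∉ Set.Ioo (u - ε) (u + ε) := by
  obtain ⟨N, hN⟩ := eventually_atTop.1 (htiTop.eventually (eventually_gt_atTop (u + 1)))
  set d : ℕ → ℝ := fun j => if ti j = u then 1 else |ti j - u| with hd
  set F : Finset ℝ := insert (1 : ℝ) ((Finset.range N).image d) with hF
  have hne : F.Nonempty := ⟨1, Finset.mem_insert_self _ _⟩
  have hpos : ∀ y ∈ F, 0 < y := by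
    intro y hy
    rcases Finset.mem_insert.1 hy with h | h
    · simp [h]
    · obtain ⟨j, _, rfl⟩ := Finset.mem_image.1 h
      by_cases hj : ti j = u
      · simp [hd, hj]
      · simp only [hd, if_neg hj]
        exact abs_pos.2 (sub_ne_zero.2 hj)
  refine ⟨F.min' hne, (F.lt_min'_iff hne).2 hpos, ?_⟩
  intro j hj hmem
  have h1 : F.min' hne ≤ 1 := Finset.min'_le F 1 (Finset.mem_insert_self _ _)
  obtain ⟨hlo, hhi⟩ := hmem
  have hjN : j < N := by
    by_contra h
    have := hN j (not_lt.1 h)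
    linarith
  have hdj : F.min' hne ≤ d j :=
    Finset.min'_le F (d j) (Finset.mem_insert_of_mem
      (Finset.mem_image_of_mem d (Finset.mem_range.2 hjN)))
  rw [hd] at hdj
  simp only [if_neg hj] at hdj
  have habs : |ti j - u| < F.min' hne := by
    rw [abs_sub_lt_iff]; exact ⟨by linarith, by linarith⟩
  linarith

lemma osc_prodSplit (ti : ℕ → ℝ) (htiTop : Tendsto ti atTop atTop) (bi : ℕ → ℝ)
    (p q r : ℝ) (hpq : p ≤ q) (hqr : q ≤ r) :
    (∏ᶠ j ∈ {j : ℕ | p < ti j ∧ ti j ≤ r}, (1 - bi j))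
      = (∏ᶠ j ∈ {j : ℕ | p < ti j ∧ ti j ≤ q}, (1 - bi j)) *
        ∏ᶠ j ∈ {j : ℕ | q < ti j ∧ ti j ≤ r}, (1 - bi j) := by
  have hdisj : Disjoint {j : ℕ | p < ti j ∧ ti j ≤ q} {j : ℕ | q < ti j ∧ ti j ≤ r} := by
    rw [Set.disjoint_left]
    intro j h1 h2
    exact absurd h2.1 (not_lt.2 h1.2)
  have hun : {j : ℕ | p < ti j ∧ ti j ≤ q} ∪ {j : ℕ | q < ti j ∧ ti j ≤ r}
      = {j : ℕ | p < ti j ∧ ti j ≤ r} := by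
    ext j
    simp only [Set.mem_union, Set.mem_setOf_eq]
    constructor
    · rintro (⟨h1, h2⟩ | ⟨h1, h2⟩)
      · exact ⟨h1, h2.trans hqr⟩
      · exact ⟨lt_of_le_of_lt hpq h1, h2⟩
    · rintro ⟨h1, h2⟩
      rcases le_or_gt (ti j) q with h | h
      · exact Or.inl ⟨h1, h⟩
      · exact Or.inr ⟨h, h2⟩
  rw [← hun, finprod_mem_union hdisj (osc_tiFinite ti htiTop p q) (osc_tiFinite ti htiTop q r)]

lemma osc_prodPos (ti : ℕ → ℝ) (htiTop : Tendsto ti atTop atTop) (bi : ℕ → ℝ)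
    (hbi : ∀ i, bi i < 1) (p q : ℝ) :
    0 < ∏ᶠ j ∈ {j : ℕ | p < ti j ∧ ti j ≤ q}, (1 - bi j) := by
  rw [finprod_mem_eq_finite_toFinset_prod _ (osc_tiFinite ti htiTop p q)]
  exact Finset.prod_pos fun j _ => by linarith [hbi j]

lemma osc_ftc_ineq (ti : ℕ → ℝ) (htiTop : Tendsto ti atTop atTop)
    (z w φ : ℝ → ℝ) :
    ∀ n : ℕ, ∀ p q : ℝ, p ≤ q →
    ∀ hfin : {i : ℕ | ti i ∈ Set.Ioo p q}.Finite, hfin.toFinset.card ≤ n →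
    ContinuousOn z (Set.Icc p q) → IntegrableOn φ (Set.Icc p q) →
    (∀ s ∈ Set.Ioo p q, (∀ i, s ≠ ti i) → HasDerivAt z (w s) s) →
    (∀ s ∈ Set.Ioo p q, (∀ i, s ≠ ti i) → w s ≤ φ s) →
    z q - z p ≤ ∫ s in p..q, φ s := by
  intro n
  induction n with
  | zero =>
    intro p q hpq hfin hcard hcont hint hderiv hle
    have hempty : {i : ℕ | ti i ∈ Set.Ioo p q} = ∅ := by
      have := Finset.card_eq_zero.1 (Nat.le_zero.1 hcard)
      rwa [Set.Finite.toFinset_eq_empty] at this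
    have hempty' : hfin.toFinset = ∅ := Finset.card_eq_zero.1 (Nat.le_zero.1 hcard)
    have hni : ∀ s ∈ Set.Ioo p q, ∀ i, s ≠ ti i := by
      intro s hs i hsi
      have hmem : i ∈ hfin.toFinset := hfin.mem_toFinset.2 (show ti i ∈ Set.Ioo p q from hsi ▸ hs)
      rw [hempty'] at hmem
      simp at hmem
    exact sub_le_integral_of_hasDeriv_right_of_le hpq hcont
      (fun s hs => (hderiv s hs (hni s hs)).hasDerivWithinAt)
      hint (fun s hs => hle s hs (hni s hs))
  | succ n IH =>
    intro p q hpq hfin hcard hcont hint hderiv hle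
    by_cases hc : hfin.toFinset.card ≤ n
    · exact IH p q hpq hfin hc hcont hint hderiv hle
    have hne : hfin.toFinset.Nonempty := Finset.card_pos.1 (by omega)
    obtain ⟨i0, hi0mem, hi0⟩ := Finset.exists_mem_eq_sup' hne ti
    have hm : ti i0 ∈ Set.Ioo p q := by
      have := hfin.mem_toFinset.1 hi0mem
      exact this
    set m := ti i0 with hmdef
    -- impulses in (m, q) : none
    have hfin2 : {i : ℕ | ti i ∈ Set.Ioo m q}.Finite := osc_tiFinite' ti htiTop m q
    have hcard2 : hfin2.toFinset.card ≤ n := by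
      have : hfin2.toFinset = ∅ := by
        rw [Set.Finite.toFinset_eq_empty]
        ext i
        simp only [Set.mem_setOf_eq, Set.mem_empty_iff_false, iff_false]
        rintro ⟨h1, h2⟩
        have himem : i ∈ hfin.toFinset := hfin.mem_toFinset.2 ⟨hm.1.trans h1, h2⟩
        have hle' := Finset.le_sup' ti himem
        exact absurd h1 (not_lt.2 (le_of_le_of_eq hle' hi0))
      rw [this]; simp
    -- impulses in (p, m)
    have hfin1 : {i : ℕ | ti i ∈ Set.Ioo p m}.Finite := osc_tiFinite' ti htiTop p m
    have hcard1 : hfin1.toFinset.card ≤ n := by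
      have hsub : hfin1.toFinset ⊆ hfin.toFinset.erase i0 := by
        intro i hi
        have hi' := hfin1.mem_toFinset.1 hi
        refine Finset.mem_erase.2 ⟨?_, hfin.mem_toFinset.2 ⟨hi'.1, hi'.2.trans hm.2⟩⟩
        intro h
        rw [h] at hi'
        exact absurd hi'.2 (lt_irrefl _)
      calc hfin1.toFinset.card ≤ (hfin.toFinset.erase i0).card := Finset.card_le_card hsub
        _ = hfin.toFinset.card - 1 := Finset.card_erase_of_mem hi0mem
        _ ≤ n := by omega
    have h1 : z m - z p ≤ ∫ s in p..m, φ s :=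
      IH p m hm.1.le hfin1 hcard1
        (hcont.mono (Set.Icc_subset_Icc le_rfl hm.2.le))
        (hint.mono_set (Set.Icc_subset_Icc le_rfl hm.2.le))
        (fun s hs => hderiv s ⟨hs.1, hs.2.trans hm.2⟩)
        (fun s hs => hle s ⟨hs.1, hs.2.trans hm.2⟩)
    have h2 : z q - z m ≤ ∫ s in m..q, φ s :=
      IH m q hm.2.le hfin2 hcard2
        (hcont.mono (Set.Icc_subset_Icc hm.1.le le_rfl))
        (hint.mono_set (Set.Icc_subset_Icc hm.1.le le_rfl))
        (fun s hs => hderiv s ⟨hm.1.trans hs.1, hs.2⟩)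
        (fun s hs => hle s ⟨hm.1.trans hs.1, hs.2⟩)
    have hii1 : IntervalIntegrable φ volume p m :=
      (intervalIntegrable_iff_integrableOn_Icc_of_le hm.1.le).2
        (hint.mono_set (Set.Icc_subset_Icc le_rfl hm.2.le))
    have hii2 : IntervalIntegrable φ volume m q :=
      (intervalIntegrable_iff_integrableOn_Icc_of_le hm.2.le).2
        (hint.mono_set (Set.Icc_subset_Icc hm.1.le le_rfl))
    have := integral_add_adjacent_intervals hii1 hii2
    linarith

theorem osc_aux
    (a b c : ℝ → ℝ) (ha : Continuous a) (hb : Continuous b) (hc : Continuous c)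
    (hbnn : ∀ t, 0 ≤ b t) (hcnn : ∀ t, 0 ≤ c t)
    (τ : ℝ) (hτ : 0 < τ)
    (bi : ℕ → ℝ) (hbi : ∀ i, bi i < 1)
    (ti : ℕ → ℝ) (hti : StrictMono ti) (hti0 : 0 < ti 0)
    (htiTop : Tendsto ti atTop atTop)
    (hcrit : 1 < Filter.limsup (fun t => ∫ s in (t - min τ 1)..t,
      (∏ᶠ j ∈ {j : ℕ | s - τ < ti j ∧ ti j ≤ s}, (1 - bi j)) * b s *
        Real.exp (∫ u in (s - τ)..s, a u)) Filter.atTop)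
    (x : ℝ → ℝ)
    (hsol : ∀ t, 0 < t → (∀ i, t ≠ ti i) →
      HasDerivAt x (-(a t * x t + b t * x (t - τ) + c t * x ((⌊t - 1⌋ : ℤ) : ℝ))) t)
    (hrc : ∀ i, ContinuousWithinAt x (Set.Ici (ti i)) (ti i))
    (himp : ∀ i, Tendsto x (nhdsWithin (ti i) (Set.Iio (ti i)))
      (nhds ((1 - bi i) * x (ti i))))
    (T : ℝ) (hT : ∀ t, T < t → 0 < x t) : False := by
  have hTle : T ≤ max T 0 := le_max_left T 0
  set t0 : ℝ := max T 0 + τ + 3 with ht0def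
  have ht0pos : 0 < t0 := by
    have := le_max_right T 0
    rw [ht0def]; linarith
  set Q : ℝ → ℝ := fun t => ∏ᶠ j ∈ {j : ℕ | t0 < ti j ∧ ti j ≤ t}, (1 - bi j) with hQdef
  set E : ℝ → ℝ := fun t => Real.exp (∫ u in t0..t, a u) with hEdef
  set z : ℝ → ℝ := fun t => x t * (E t * Q t) with hzdef
  set w : ℝ → ℝ := fun s =>
    -((b s * x (s - τ) + c s * x ((⌊s - 1⌋ : ℤ) : ℝ)) * (E s * Q s)) with hwdef
  have hQpos : ∀ t, 0 < Q t := fun t => osc_prodPos ti htiTop bi hbi t0 t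
  have hprim : ∀ u : ℝ, HasDerivAt (fun v => ∫ s in t0..v, a s) (a u) u := fun u =>
    integral_hasDerivAt_right (ha.intervalIntegrable _ _)
      ha.stronglyMeasurable.stronglyMeasurableAtFilter ha.continuousAt
  have hprimCont : Continuous fun v => ∫ s in t0..v, a s :=
    continuous_iff_continuousAt.2 fun u => (hprim u).continuousAt
  have hEderiv : ∀ u : ℝ, HasDerivAt E (Real.exp (∫ s in t0..u, a s) * a u) u := fun u =>
    (hprim u).exp
  have hEcont : Continuous E := Real.continuous_exp.comp hprimCont
  have hEpos : ∀ u, 0 < E u := fun u => Real.exp_pos _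
  have hEmul : ∀ s t : ℝ, E t = E s * Real.exp (∫ u in s..t, a u) := by
    intro s t
    rw [hEdef]
    simp only
    rw [← Real.exp_add, ← integral_add_adjacent_intervals
      (ha.intervalIntegrable t0 s) (ha.intervalIntegrable s t)]
  have hQconst : ∀ s t : ℝ, t0 ≤ s → s ≤ t → (∀ j, ¬(s < ti j ∧ ti j ≤ t)) → Q t = Q s := by
    intro s t h1 h2 h3
    rw [hQdef]
    simp only
    rw [osc_prodSplit ti htiTop bi t0 s t h1 h2]
    have he : {j : ℕ | s < ti j ∧ ti j ≤ t} = ∅ := by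
      ext j; simpa using h3 j
    rw [he, finprod_mem_empty, mul_one]
  have hzpos : ∀ u, T < u → 0 < z u := fun u hu =>
    mul_pos (hT u hu) (mul_pos (hEpos u) (hQpos u))
  have hQlocal : ∀ u, t0 < u → (∀ i, u ≠ ti i) → ∀ᶠ v in 𝓝 u, Q v = Q u := by
    intro u hu hni
    obtain ⟨ε, hε, hsep⟩ := osc_discrete ti htiTop u
    rw [Metric.eventually_nhds_iff]
    refine ⟨min ε (u - t0), lt_min hε (by linarith), ?_⟩
    intro v hv
    rw [Real.dist_eq] at hv
    have hv1 : |v - u| < ε := lt_of_lt_of_le hv (min_le_left _ _)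
    have hv2 : |v - u| < u - t0 := lt_of_lt_of_le hv (min_le_right _ _)
    rw [abs_sub_lt_iff] at hv1 hv2
    rcases le_total v u with hvu | hvu
    · refine (hQconst v u (by linarith) hvu ?_).symm
      rintro j ⟨h1, h2⟩
      rcases eq_or_lt_of_le h2 with h | h
      · exact hni j h.symm
      · exact hsep j (ne_of_lt h) ⟨by linarith, by linarith⟩
    · refine hQconst u v (by linarith) hvu ?_
      rintro j ⟨h1, h2⟩
      exact hsep j (ne_of_gt h1) ⟨by linarith, by linarith⟩
  have hzderiv : ∀ u, t0 < u → (∀ i, u ≠ ti i) → HasDerivAt z (w u) u := by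
    intro u hu hni
    have hx' := hsol u (ht0pos.trans hu) hni
    have hE' : HasDerivAt E (E u * a u) u := hEderiv u
    have hd := (hx'.mul (hE'.mul_const (Q u)))
    have heq : z =ᶠ[𝓝 u] fun v => x v * (E v * Q u) := by
      filter_upwards [hQlocal u hu hni] with v hv
      rw [hzdef]
      simp only [hv]
    have hd2 : HasDerivAt z
        (-(a u * x u + b u * x (u - τ) + c u * x ((⌊u - 1⌋ : ℤ) : ℝ)) * (E u * Q u)
          + x u * (E u * a u * Q u)) u := by
      exact HasDerivAt.congr_of_eventuallyEq hd heq
    convert hd2 using 1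
    rw [hwdef]
    ring
  have hzcont : ∀ u, t0 < u → ContinuousAt z u := by
    intro u hu
    by_cases hni : ∀ i, u ≠ ti i
    · exact (hzderiv u hu hni).continuousAt
    push_neg at hni
    obtain ⟨i, hi⟩ := hni
    subst hi
    set u := ti i with hu_def
    obtain ⟨ε, hε, hsep⟩ := osc_discrete ti htiTop u
    set ε' : ℝ := min ε (u - t0) with hε'def
    have hε' : 0 < ε' := lt_min hε (by linarith)
    have hε'ε : ε' ≤ ε := min_le_left _ _
    have hε't0 : ε' ≤ u - t0 := min_le_right _ _
    have h1bi : (1 : ℝ) - bi i ≠ 0 := by have := hbi i; linarith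
    rw [continuousAt_iff_continuous_left_right]
    constructor
    · -- left continuity
      rw [← continuousWithinAt_diff_self]
      have hIic : Set.Iic u \ {u} = Set.Iio u := by
        ext v; simp [lt_iff_le_and_ne]
      rw [hIic]
      have hQv : ∀ v ∈ Set.Ioo (u - ε') u, Q v = Q u / (1 - bi i) := by
        intro v hv
        have hset : {j : ℕ | v < ti j ∧ ti j ≤ u} = {i} := by
          ext j
          simp only [Set.mem_setOf_eq, Set.mem_singleton_iff]
          constructor
          · rintro ⟨h1, h2⟩
            rcases eq_or_lt_of_le h2 with h | h
            · exact hti.injective h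
            · exact absurd ⟨by have := hv.1; linarith, by linarith⟩ (hsep j (ne_of_lt h))
          · rintro rfl
            exact ⟨hv.2, le_rfl⟩
        have hsplit := osc_prodSplit ti htiTop bi t0 v u (by have := hv.1; linarith) hv.2.le
        rw [hset, finprod_mem_singleton] at hsplit
        have : Q u = Q v * (1 - bi i) := hsplit
        field_simp [h1bi] at this ⊢
        linarith [this]
      have hbase : Tendsto (fun v => x v * (E v * (Q u / (1 - bi i)))) (𝓝[<] u)
          (𝓝 ((1 - bi i) * x u * (E u * (Q u / (1 - bi i))))) :=
        (himp i).mul (((hEcont.tendsto u).mono_left nhdsWithin_le_nhds).mul tendsto_const_nhds)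
      have hval : (1 - bi i) * x u * (E u * (Q u / (1 - bi i))) = z u := by
        rw [hzdef]
        field_simp
      rw [hval] at hbase
      refine (Tendsto.congr' ?_ hbase : ContinuousWithinAt z (Set.Iio u) u)
      filter_upwards [Ioo_mem_nhdsLT_of_mem (show u ∈ Set.Ioc (u - ε') u from ⟨by linarith, le_rfl⟩)]
        with v hv
      rw [hzdef]
      simp only [hQv v hv]
    · -- right continuity
      have hbase : ContinuousWithinAt (fun v => x v * (E v * Q u)) (Set.Ici u) u :=
        (hrc i).mul ((hEcont.continuousAt.continuousWithinAt).mul continuousWithinAt_const)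
      refine ContinuousWithinAt.congr_of_eventuallyEq hbase ?_ rfl
      filter_upwards [Ico_mem_nhdsGE_of_mem (show u ∈ Set.Ico u (u + ε') from ⟨le_rfl, by linarith⟩)]
        with v hv
      have hQv : Q v = Q u := by
        refine hQconst u v (by linarith) hv.1 ?_
        rintro j ⟨h1, h2⟩
        exact hsep j (ne_of_gt h1) ⟨by linarith, by linarith [hv.2]⟩
      rw [hzdef]
      simp only [hQv]
  have hwle : ∀ s, t0 < s → w s ≤ 0 := by
    intro s hs
    have hx1 : 0 < x (s - τ) := hT _ (by rw [ht0def] at hs; linarith)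
    have hx2 : 0 < x ((⌊s - 1⌋ : ℤ) : ℝ) := by
      refine hT _ ?_
      have hfl : s - 1 - 1 < (⌊s - 1⌋ : ℝ) := Int.sub_one_lt_floor (s - 1)
      rw [ht0def] at hs
      linarith
    have h1 : 0 ≤ b s * x (s - τ) + c s * x ((⌊s - 1⌋ : ℤ) : ℝ) :=
      add_nonneg (mul_nonneg (hbnn s) hx1.le) (mul_nonneg (hcnn s) hx2.le)
    have h2 := mul_nonneg h1 (mul_pos (hEpos s) (hQpos s)).le
    rw [hwdef]
    simp only
    linarith
  have hmono : ∀ p q : ℝ, t0 < p → p ≤ q → z q ≤ z p := by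
    intro p q hp hq
    have hfin := osc_tiFinite' ti htiTop p q
    have key := osc_ftc_ineq ti htiTop z w (fun _ => (0 : ℝ)) hfin.toFinset.card p q hq hfin
      le_rfl (fun u hu => (hzcont u (hp.trans_le hu.1)).continuousWithinAt)
      (integrableOn_zero)
      (fun s hs _hni => hzderiv s (hp.trans hs.1) _hni)
      (fun s hs _hni => hwle s (hp.trans hs.1))
    simpa using key
  -- choose a large time where the integral criterion exceeds 1
  set l : ℝ := min τ 1 with hldef
  have hl0 : 0 < l := lt_min hτ one_pos
  have hlτ : l ≤ τ := min_le_left _ _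
  have hl1 : l ≤ 1 := min_le_right _ _
  set B : ℝ → ℝ := fun s =>
    (∏ᶠ j ∈ {j : ℕ | s - τ < ti j ∧ ti j ≤ s}, (1 - bi j)) * b s *
      Real.exp (∫ u in (s - τ)..s, a u) with hBdef
  have hBnn : ∀ s, 0 ≤ B s := by
    intro s
    rw [hBdef]
    exact mul_nonneg (mul_nonneg (osc_prodPos ti htiTop bi hbi _ _).le (hbnn s))
      (Real.exp_pos _).le
  have hnn : ∀ t : ℝ, 0 ≤ ∫ s in (t - l)..t, B s := by
    intro t
    exact intervalIntegral.integral_nonneg (by linarith) (fun s _ => hBnn s)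
  have hfreq : ∃ᶠ t in atTop, 1 < ∫ s in (t - l)..t, B s := by
    refine frequently_lt_of_lt_limsup ?_ ?_
    · exact isCoboundedUnder_le_of_le atTop hnn
    · exact hcrit
  obtain ⟨t, hgt, htlarge⟩ := (hfreq.and_eventually (eventually_ge_atTop (t0 + τ + 2))).exists
  set A : ℝ := t - l with hAdef
  have hAt0 : t0 + τ + 1 ≤ A := by rw [hAdef]; linarith
  -- integrability of the comparison function
  obtain ⟨N, hN⟩ := eventually_atTop.1 (htiTop.eventually (eventually_gt_atTop t))
  set Pn : ℝ → ℝ := fun s =>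
    ∏ j ∈ Finset.range N, if s - τ < ti j ∧ ti j ≤ s then (1 - bi j) else 1 with hPndef
  have hPn_eq : ∀ s ∈ Set.Icc A t,
      (∏ᶠ j ∈ {j : ℕ | s - τ < ti j ∧ ti j ≤ s}, (1 - bi j)) = Pn s := by
    intro s hs
    rw [finprod_mem_eq_finite_toFinset_prod _ (osc_tiFinite ti htiTop (s - τ) s), hPndef]
    simp only
    rw [← Finset.prod_filter]
    refine (Finset.prod_congr ?_ (fun _ _ => rfl)).symm
    ext j
    simp only [Set.Finite.mem_toFinset, Set.mem_setOf_eq, Finset.mem_filter, Finset.mem_range]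
    constructor
    · rintro ⟨hjN, h1, h2⟩
      exact ⟨h1, h2⟩
    · rintro ⟨h1, h2⟩
      refine ⟨?_, h1, h2⟩
      by_contra h
      exact absurd (hN j (not_lt.1 h)) (not_lt.2 (h2.trans hs.2))
  have hPn_meas : Measurable Pn := by
    refine Finset.measurable_prod _ (fun j _ => ?_)
    refine Measurable.ite ?_ measurable_const measurable_const
    have hset : {s : ℝ | s - τ < ti j ∧ ti j ≤ s} = Set.Ico (ti j) (ti j + τ) := by
      ext v
      simp only [Set.mem_setOf_eq, Set.mem_Ico]
      constructor <;> rintro ⟨h1, h2⟩ <;> constructor <;> linarith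
    exact hset ▸ measurableSet_Ico
  have hexpCont : Continuous fun s => Real.exp (∫ u in (s - τ)..s, a u) := by
    have heq : (fun s => Real.exp (∫ u in (s - τ)..s, a u))
        = fun s => Real.exp ((∫ u in t0..s, a u) - ∫ u in t0..(s - τ), a u) := by
      funext s
      congr 1
      have h := integral_add_adjacent_intervals (μ := volume) (ha.intervalIntegrable t0 (s - τ))
        (ha.intervalIntegrable (s - τ) s)
      linarith
    rw [heq]
    exact Real.continuous_exp.comp
      (hprimCont.sub (hprimCont.comp (continuous_id.sub continuous_const)))
  have hBint : IntegrableOn B (Set.Icc A t) := by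
    set G : ℝ → ℝ := fun s => Pn s * (b s * Real.exp (∫ u in (s - τ)..s, a u)) with hGdef
    have hG_meas : Measurable G :=
      hPn_meas.mul (hb.measurable.mul hexpCont.measurable)
    have hGB : ∀ s ∈ Set.Icc A t, B s = G s := by
      intro s hs
      rw [hBdef, hGdef]
      simp only
      rw [hPn_eq s hs]
      ring
    set C1 : ℝ := ∏ j ∈ Finset.range N, max |1 - bi j| 1 with hC1def
    have hC1nn : 0 ≤ C1 :=
      Finset.prod_nonneg fun j _ => le_trans zero_le_one (le_max_right _ _)
    have hPn_bdd : ∀ s, |Pn s| ≤ C1 := by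
      intro s
      rw [hPndef, hC1def]
      simp only
      rw [Finset.abs_prod]
      refine Finset.prod_le_prod (fun j _ => abs_nonneg _) (fun j _ => ?_)
      split_ifs
      · exact le_max_left _ _
      · rw [abs_one]; exact le_max_right _ _
    obtain ⟨C2, hC2⟩ := IsCompact.exists_bound_of_continuousOn isCompact_Icc
      ((hb.mul hexpCont).continuousOn :
        ContinuousOn (fun s => b s * Real.exp (∫ u in (s - τ)..s, a u)) (Set.Icc A t))
    have hGint : IntegrableOn G (Set.Icc A t) := by
      refine Measure.integrableOn_of_bounded
        ((measure_Icc_lt_top : volume (Set.Icc A t) < ⊤).ne)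
        hG_meas.aestronglyMeasurable (M := C1 * C2) ?_
      refine (ae_restrict_iff' measurableSet_Icc).2
        (Filter.Eventually.of_forall fun s hs => ?_)
      rw [Real.norm_eq_abs, hGdef]
      simp only
      rw [abs_mul]
      exact mul_le_mul (hPn_bdd s) (hC2 s hs) (abs_nonneg _) hC1nn
    exact hGint.congr_fun (fun s hs => (hGB s hs).symm) measurableSet_Icc
  have hφint : IntegrableOn (fun s => -z A * B s) (Set.Icc A t) := hBint.const_mul _
  have hAT : t0 < A := by linarith
  have hAt : A ≤ t := by rw [hAdef]; linarith
  have hfin := osc_tiFinite' ti htiTop A t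
  have key := osc_ftc_ineq ti htiTop z w (fun s => -z A * B s) hfin.toFinset.card A t hAt hfin
    le_rfl (fun u hu => (hzcont u (hAT.trans_le hu.1)).continuousWithinAt)
    hφint
    (fun s hs hni => hzderiv s (hAT.trans hs.1) hni)
    ?_
  · rw [intervalIntegral.integral_const_mul] at key
    have hTA : T < A := by rw [ht0def] at hAT; linarith
    have hzA := hzpos A hTA
    have hzt := hzpos t (by linarith)
    nlinarith [mul_pos (sub_pos.2 hgt) hzA]
  · intro s hs hni
    have hst0 : t0 < s := hAT.trans hs.1
    have hsτ : t0 < s - τ := by linarith [hs.1]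
    have hsτA : s - τ ≤ A := by rw [hAdef]; linarith [hs.2]
    have hz1 : z A ≤ z (s - τ) := hmono (s - τ) A hsτ hsτA
    have hx2 : 0 < x ((⌊s - 1⌋ : ℤ) : ℝ) := by
      refine hT _ ?_
      have hfl : s - 1 - 1 < (⌊s - 1⌋ : ℝ) := Int.sub_one_lt_floor (s - 1)
      rw [ht0def] at hst0
      linarith
    have hcx : 0 ≤ c s * x ((⌊s - 1⌋ : ℤ) : ℝ) * (E s * Q s) :=
      mul_nonneg (mul_nonneg (hcnn s) hx2.le) (mul_pos (hEpos s) (hQpos s)).le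
    have hEs : E s = E (s - τ) * Real.exp (∫ u in (s - τ)..s, a u) := hEmul (s - τ) s
    have hQs : Q s = Q (s - τ) * ∏ᶠ j ∈ {j : ℕ | s - τ < ti j ∧ ti j ≤ s}, (1 - bi j) := by
      rw [hQdef]
      simp only
      exact osc_prodSplit ti htiTop bi t0 (s - τ) s hsτ.le (by linarith)
    have heq : b s * x (s - τ) * (E s * Q s) = B s * z (s - τ) := by
      rw [hBdef, hzdef]
      simp only
      rw [hEs, hQs]
      ring
    have hBz : B s * z A ≤ B s * z (s - τ) := mul_le_mul_of_nonneg_left hz1 (hBnn s)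
    have hexpand : (b s * x (s - τ) + c s * x ((⌊s - 1⌋ : ℤ) : ℝ)) * (E s * Q s)
        = b s * x (s - τ) * (E s * Q s) + c s * x ((⌊s - 1⌋ : ℤ) : ℝ) * (E s * Q s) := by
      ring
    have hcomm : -z A * B s = -(B s * z A) := by ring
    rw [hwdef]
    simp only
    rw [hcomm, hexpand, heq]
    linarith

end OscAux

/-- Theorem 2 (first condition): with `l = min{τ,1}`, if
`limsup_{t→∞} ∫_{t-l}^{t} (∏_{s-τ < t_j ≤ s}(1-b_j)) b(s) exp(∫_{s-τ}^{s} a) ds > 1`,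
then every solution of `x'(t) + a(t)x(t) + b(t)x(t-τ) + c(t)x(⌊t-1⌋) = 0` (`t ≠ t_i`),
`Δx(t_i) = b_i x(t_i)`, is oscillatory. -/
theorem oscillation_limsup_criterion
    (a b c : ℝ → ℝ) (ha : Continuous a) (hb : Continuous b) (hc : Continuous c)
    (hbnn : ∀ t, 0 ≤ b t) (hcnn : ∀ t, 0 ≤ c t)
    (τ : ℝ) (hτ : 0 < τ)
    (bi : ℕ → ℝ) (hbi : ∀ i, bi i < 1)
    (ti : ℕ → ℝ) (hti : StrictMono ti) (hti0 : 0 < ti 0)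
    (htiTop : Tendsto ti atTop atTop)
    (hcrit : 1 < Filter.limsup (fun t => ∫ s in (t - min τ 1)..t,
      (∏ᶠ j ∈ {j : ℕ | s - τ < ti j ∧ ti j ≤ s}, (1 - bi j)) * b s *
        Real.exp (∫ u in (s - τ)..s, a u)) Filter.atTop)
    (x : ℝ → ℝ)
    (hsol : ∀ t, 0 < t → (∀ i, t ≠ ti i) →
      HasDerivAt x (-(a t * x t + b t * x (t - τ) + c t * x ((⌊t - 1⌋ : ℤ) : ℝ))) t)
    (hrc : ∀ i, ContinuousWithinAt x (Set.Ici (ti i)) (ti i))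
    (himp : ∀ i, Tendsto x (nhdsWithin (ti i) (Set.Iio (ti i)))
      (nhds ((1 - bi i) * x (ti i)))) :
    (¬ ∃ T, ∀ t, T < t → 0 < x t) ∧ (¬ ∃ T, ∀ t, T < t → x t < 0) := by
  constructor
  · rintro ⟨T, hT⟩
    exact osc_aux a b c ha hb hc hbnn hcnn τ hτ bi hbi ti hti hti0 htiTop hcrit x hsol hrc
      himp T hT
  · rintro ⟨T, hT⟩
    refine osc_aux a b c ha hb hc hbnn hcnn τ hτ bi hbi ti hti hti0 htiTop hcrit
      (fun t => -x t) ?_ ?_ ?_ T (fun t ht => neg_pos.2 (hT t ht))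
    · intro t ht hni
      have h : HasDerivAt (fun t => -x t) _ t := (hsol t ht hni).neg
      convert h using 1
      ring
    · intro i
      exact (hrc i).neg
    · intro i
      have h := (himp i).neg
      rw [show (1 - bi i) * (-x (ti i)) = -((1 - bi i) * x (ti i)) by ring]
      exact h
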